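/- Let X_n take values in [0, C] with conditional means m_n = E[X_n | ℱ_{n-1}] and conditional variances v_n = E[(X_n - m_n)² | ℱ_{n-1}]. Then almost surely: ∑_n X_n converges if and only if both ∑_n m_n and ∑_n v_n converge. -/

import Mathlib

open Filter MeasureTheory

theorem stmt_18 {Ω : Type*} {m0 : MeasurableSpace Ω} (μ : Measure Ω) [IsProbabilityMeasure μ]
    (ℱ : Filtration ℕ m0) (X : ℕ → Ω → ℝ) (C : ℝ) (hC : 0 < C)
    (hadapted : ∀ n, StronglyMeasurable[ℱ (n + 1)] (X (n + 1)))
    (hbdd : ∀ n, ∀ᵐ ω ∂μ, X (n + 1) ω ∈ Set.Icc 0 C)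
    (m : ℕ → Ω → ℝ)
    (hm : ∀ n, m (n + 1) =ᵐ[μ] μ[X (n + 1) | ℱ n])
    (v : ℕ → Ω → ℝ)
    (hv : ∀ n, v (n + 1) =ᵐ[μ] μ[fun ω => (X (n + 1) ω - m (n + 1) ω) ^ 2 | ℱ n]) :
    ∀ᵐ ω ∂μ, (Summable (fun n => X (n + 1) ω) ↔
      Summable (fun n => m (n + 1) ω) ∧ Summable (fun n => v (n + 1) ω)) := by
  classical
  set m' : ℕ → Ω → ℝ := fun n => μ[X (n + 1) | ℱ n] with hm'def
  set f : ℕ → Ω → ℝ := fun n => ∑ k ∈ Finset.range n, X (k + 1) with hfdef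
  -- integrability of X (n+1)
  have hX_meas : ∀ n, AEStronglyMeasurable (X (n + 1)) μ := fun n =>
    ((hadapted n).mono (ℱ.le _)).aestronglyMeasurable
  have hX_int : ∀ n, Integrable (X (n + 1)) μ := by
    intro n
    refine Integrable.mono' (integrable_const C) (hX_meas n) ?_
    filter_upwards [hbdd n] with ω hω
    rw [Real.norm_eq_abs, abs_of_nonneg hω.1]
    exact hω.2
  have hf_adapted : StronglyAdapted ℱ f := by
    intro n
    refine Finset.stronglyMeasurable_sum _ fun k hk => ?_
    exact (hadapted k).mono (ℱ.mono (Finset.mem_range.1 hk))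
  have hf_int : ∀ n, Integrable (f n) μ :=
    fun n => integrable_finset_sum' _ fun k _ => hX_int k
  have hf_succ_sub : ∀ n, f (n + 1) - f n = X (n + 1) := by
    intro n
    simp [hfdef, Finset.sum_range_succ_sub_sum]
  -- bounded differences
  set R : NNReal := ⟨C, hC.le⟩ with hRdef
  have hRC : (R : ℝ) = C := rfl
  have hbdd_diff : ∀ᵐ ω ∂μ, ∀ i, |f (i + 1) ω - f i ω| ≤ (R : ℝ) := by
    rw [ae_all_iff]
    intro i
    filter_upwards [hbdd i] with ω hω
    have : f (i + 1) ω - f i ω = X (i + 1) ω := by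
      have := congrFun (hf_succ_sub i) ω
      simpa using this
    rw [this, hRC, abs_of_nonneg hω.1]
    exact hω.2
  set M : ℕ → Ω → ℝ := martingalePart f ℱ μ with hMdef
  set P : ℕ → Ω → ℝ := predictablePart f ℱ μ with hPdef
  have hMP : ∀ n ω, M n ω = f n ω - P n ω := fun n ω => rfl
  have hPsum : ∀ n ω, P n ω = ∑ k ∈ Finset.range n, m' k ω := by
    intro n ω
    simp only [hPdef, predictablePart, hf_succ_sub, Finset.sum_apply]
    rfl
  have hMmart : Martingale M ℱ μ := martingale_martingalePart hf_adapted hf_int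
  have hMbdd : ∀ᵐ ω ∂μ, ∀ i, |M (i + 1) ω - M i ω| ≤ ((2 * R : NNReal) : ℝ) := by
    simpa only [Real.norm_eq_abs, NNReal.coe_mul, NNReal.coe_ofNat] using
      martingalePart_bdd_difference (f := f) (R := (R : ℝ)) ℱ (by simpa only [Real.norm_eq_abs] using hbdd_diff)
  have key := hMmart.bddAbove_range_iff_bddBelow_range hMbdd
  -- m' is in [0, C] a.e.
  have hm'_mem : ∀ n, ∀ᵐ ω ∂μ, m' n ω ∈ Set.Icc 0 C := by
    intro n
    have h0 : 0 ≤ᵐ[μ] m' n := by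
      refine condExp_nonneg ?_
      filter_upwards [hbdd n] with ω hω using hω.1
    have h1 : m' n ≤ᵐ[μ] μ[(fun _ => C) | ℱ n] := by
      refine condExp_mono (hX_int n) (integrable_const C) ?_
      filter_upwards [hbdd n] with ω hω using hω.2
    rw [condExp_const (ℱ.le n)] at h1
    filter_upwards [h0, h1] with ω hω0 hω1
    exact ⟨hω0, hω1⟩
  -- v bound : 0 ≤ v (n+1) ≤ 2C * m (n+1) a.e.
  have hv_bound : ∀ n, ∀ᵐ ω ∂μ, 0 ≤ v (n + 1) ω ∧ v (n + 1) ω ≤ 2 * C * m (n + 1) ω := by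
    intro n
    set g : Ω → ℝ := fun ω => (X (n + 1) ω - m' n ω) ^ 2 with hgdef
    have hg_meas : AEStronglyMeasurable g μ := by
      have : AEStronglyMeasurable (fun ω => X (n + 1) ω - m' n ω) μ :=
        (hX_meas n).sub ((stronglyMeasurable_condExp.mono (ℱ.le n)).aestronglyMeasurable)
      exact this.pow 2
    have hg_bdd : ∀ᵐ ω ∂μ, g ω ≤ C * (X (n + 1) ω + m' n ω) := by
      filter_upwards [hbdd n, hm'_mem n] with ω hω hω'
      have habs : |X (n + 1) ω - m' n ω| ≤ C := by
        rw [abs_sub_le_iff]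
        constructor <;> nlinarith [hω.1, hω.2, hω'.1, hω'.2]
      have h2 : |X (n + 1) ω - m' n ω| ≤ X (n + 1) ω + m' n ω := by
        rw [abs_sub_le_iff]
        constructor <;> nlinarith [hω.1, hω'.1]
      have hmm := mul_le_mul habs h2 (abs_nonneg _) hC.le
      have haa := abs_mul_abs_self (X (n + 1) ω - m' n ω)
      show (X (n + 1) ω - m' n ω) ^ 2 ≤ C * (X (n + 1) ω + m' n ω)
      nlinarith [haa, hmm]
    have hg_int : Integrable g μ := by
      refine Integrable.mono' (integrable_const (C ^ 2)) hg_meas ?_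
      filter_upwards [hbdd n, hm'_mem n] with ω hω hω'
      have habs : |X (n + 1) ω - m' n ω| ≤ C := by
        rw [abs_sub_le_iff]
        constructor <;> nlinarith [hω.1, hω.2, hω'.1, hω'.2]
      show ‖(X (n + 1) ω - m' n ω) ^ 2‖ ≤ C ^ 2
      rw [Real.norm_eq_abs, abs_of_nonneg (sq_nonneg _)]
      nlinarith [abs_le.1 habs]
    -- v (n+1) =ᵐ μ[g | ℱ n]
    have hveq : v (n + 1) =ᵐ[μ] μ[g | ℱ n] := by
      refine (hv n).trans (condExp_congr_ae ?_)
      filter_upwards [hm n] with ω hω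
      rw [hgdef]
      simp only
      rw [hω]
    have hv0 : ∀ᵐ ω ∂μ, 0 ≤ v (n + 1) ω := by
      have : 0 ≤ᵐ[μ] μ[g | ℱ n] :=
        condExp_nonneg (Eventually.of_forall fun ω => sq_nonneg _)
      filter_upwards [hveq, this] with ω h1 h2
      rw [h1]; exact h2
    have hsum_int : Integrable (C • (X (n + 1) + m' n)) μ :=
      ((hX_int n).add integrable_condExp).smul C
    have hle : μ[g | ℱ n] ≤ᵐ[μ] μ[C • (X (n + 1) + m' n) | ℱ n] := by
      refine condExp_mono hg_int hsum_int ?_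
      filter_upwards [hg_bdd] with ω hω
      simpa [smul_eq_mul] using hω
    have hrhs : μ[C • (X (n + 1) + m' n) | ℱ n] =ᵐ[μ] C • (m' n + m' n) := by
      refine (condExp_smul C _ (ℱ n)).trans ?_
      have hadd : μ[X (n + 1) + m' n | ℱ n] =ᵐ[μ] m' n + m' n := by
        refine (condExp_add (hX_int n) integrable_condExp (ℱ n)).trans ?_
        have : μ[m' n | ℱ n] = m' n :=
          condExp_of_stronglyMeasurable (ℱ.le n) stronglyMeasurable_condExp integrable_condExp
        rw [this]
      filter_upwards [hadd] with ω hω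
      simp only [Pi.smul_apply, smul_eq_mul]
      rw [hω]
    filter_upwards [hv0, hveq, hle, hrhs, hm n] with ω h0 h1 h2 h3 h4
    refine ⟨h0, ?_⟩
    rw [h1, h4]
    calc (μ[g | ℱ n]) ω ≤ (μ[C • (X (n + 1) + m' n) | ℱ n]) ω := h2
      _ = C * (m' n ω + m' n ω) := by rw [h3]; simp [smul_eq_mul]
      _ = 2 * C * m' n ω := by ring
  -- collect a.e. statements
  filter_upwards [ae_all_iff.2 hbdd, ae_all_iff.2 hm'_mem, ae_all_iff.2 hm,
    ae_all_iff.2 hv_bound, key] with ω hXω hm'ω hmω hvω hkey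
  have hPnn : ∀ n, 0 ≤ m' n ω := fun n => (hm'ω n).1
  have hXnn : ∀ n, 0 ≤ X (n + 1) ω := fun n => (hXω n).1
  have hfval : ∀ n, f n ω = ∑ k ∈ Finset.range n, X (k + 1) ω := by
    intro n; simp [hfdef, Finset.sum_apply]
  constructor
  · intro hs
    -- partial sums of X bounded by tsum
    have hfb : ∀ n, f n ω ≤ ∑' k, X (k + 1) ω := by
      intro n
      rw [hfval n]
      exact hs.sum_le_tsum _ (fun k _ => hXnn k)
    -- M bounded above
    have hMa : BddAbove (Set.range fun n => M n ω) := by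
      refine ⟨∑' k, X (k + 1) ω, ?_⟩
      rintro y ⟨n, rfl⟩
      show M n ω ≤ _
      rw [hMP]
      have hP0 : 0 ≤ P n ω := by
        rw [hPsum]
        exact Finset.sum_nonneg fun k _ => hPnn k
      linarith [hfb n]
    obtain ⟨b, hb⟩ := hkey.1 hMa
    -- P bounded above, so m' summable
    have hm'sum : Summable (fun n => m' n ω) := by
      refine summable_of_sum_range_le (c := (∑' k, X (k + 1) ω) - b) hPnn (fun n => ?_)
      have hMb : b ≤ M n ω := hb ⟨n, rfl⟩
      rw [← hPsum]
      have := hMP n ω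
      linarith [hfb n]
    have hmsum : Summable (fun n => m (n + 1) ω) := by
      refine hm'sum.congr fun n => (hmω n).symm
    refine ⟨hmsum, ?_⟩
    refine Summable.of_nonneg_of_le (fun n => (hvω n).1) (fun n => (hvω n).2) ?_
    exact hmsum.mul_left (2 * C)
  · rintro ⟨hmsum, -⟩
    have hm'sum : Summable (fun n => m' n ω) := hmsum.congr fun n => hmω n
    -- M bounded below
    have hMb : BddBelow (Set.range fun n => M n ω) := by
      refine ⟨-(∑' k, m' k ω), ?_⟩
      rintro y ⟨n, rfl⟩
      show _ ≤ M n ω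
      rw [hMP]
      have hPle : P n ω ≤ ∑' k, m' k ω := by
        rw [hPsum]
        exact hm'sum.sum_le_tsum _ (fun k _ => hPnn k)
      have hf0 : 0 ≤ f n ω := by
        rw [hfval]
        exact Finset.sum_nonneg fun k _ => hXnn k
      linarith
    obtain ⟨b, hb⟩ := hkey.2 hMb
    refine summable_of_sum_range_le (c := b + ∑' k, m' k ω) hXnn (fun n => ?_)
    have hMub : M n ω ≤ b := hb ⟨n, rfl⟩
    have hPle : P n ω ≤ ∑' k, m' k ω := by
      rw [hPsum]
      exact hm'sum.sum_le_tsum _ (fun k _ => hPnn k)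
    rw [← hfval]
    have := hMP n ω
    linarith
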